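/- arXiv:2105.04592 — 2 statements merged into one kernel-verified Lean document; each statement's English description precedes it below -/
import Mathlib

section
/- Let E be a field and (D, S) a multiplicative summation on R to E. Then for every x ∈ E, there exists a series X ∈ R[[σ]] that is rationally summable over S to x if and only if there exist a, b in the image S(D) with b ≠ 0 and x = a·b⁻¹. (The image of the rational extension of S is the field of fractions of S(D) inside E.) -/
/-- A summation on a commutative ring `R` to a commutative `R`-algebra `E`:
an `R`-submodule `D` of `R[[σ]]` containing all polynomials, together with a map
`S` (whose values are only meaningful on `D`) which is `R`-linear on `D`,
sums `1` to `1`, and is invariant under multiplication by `1 - σ`. -/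
structure Summation (R E : Type*) [CommRing R] [CommRing E] [Algebra R E] where
  D : Submodule R (PowerSeries R)
  S : PowerSeries R → E
  S_add : ∀ X ∈ D, ∀ Y ∈ D, S (X + Y) = S X + S Y
  S_smul : ∀ (r : R), ∀ X ∈ D, S (r • X) = r • S X
  poly_mem : ∀ F : Polynomial R, (F : PowerSeries R) ∈ D
  S_one : S 1 = 1
  shift_mem : ∀ X ∈ D, (1 - PowerSeries.X) * X ∈ D
  S_shift : ∀ X ∈ D, S ((1 - PowerSeries.X) * X) = 0


/-- A multiplicative summation: the domain is moreover an `R`-subalgebra of `R[[σ]]`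
and `S` is an `R`-algebra homomorphism on it. -/
structure MulSummation (R E : Type*) [CommRing R] [CommRing E] [Algebra R E]
    extends Summation R E where
  mul_mem : ∀ X ∈ D, ∀ Y ∈ D, X * Y ∈ D
  S_mul : ∀ X ∈ D, ∀ Y ∈ D, S (X * Y) = S X * S Y

/-- `X` is rationally summable over the multiplicative summation `𝒮` to `x`
(with the codomain a field, regularity of `𝒮.S B` means `𝒮.S B ≠ 0`). -/
def RatSummable {R E : Type*} [CommRing R] [CommRing E] [Algebra R E]
    (𝒮 : MulSummation R E) (X : PowerSeries R) (x : E) : Prop :=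
  ∃ A B : PowerSeries R, A ∈ 𝒮.D ∧ B ∈ 𝒮.D ∧ A = B * X ∧
    𝒮.S B ≠ 0 ∧ 𝒮.S A = 𝒮.S B * x

theorem ratSummable_image_eq_fractionField {R E : Type*} [CommRing R] [Nontrivial R]
    [Field E] [Algebra R E] (𝒮 : MulSummation R E) (x : E) :
    (∃ X : PowerSeries R, RatSummable 𝒮 X x) ↔
    (∃ a b : E, (∃ A ∈ 𝒮.D, 𝒮.S A = a) ∧ (∃ B ∈ 𝒮.D, 𝒮.S B = b) ∧
      b ≠ 0 ∧ x = a * b⁻¹) := by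
  constructor
  · rintro ⟨X, A, B, hA, hB, hAB, hSB, hSA⟩
    exact ⟨𝒮.S A, 𝒮.S B, ⟨A, hA, rfl⟩, ⟨B, hB, rfl⟩, hSB,
      by rw [hSA, mul_comm (𝒮.S B) x, mul_inv_cancel_right₀ hSB]⟩
  · rintro ⟨a, b, ⟨A, hA, rfl⟩, ⟨B, hB, rfl⟩, hb, hx⟩
    have h1 : ((1 : Polynomial R) : PowerSeries R) ∈ 𝒮.D := 𝒮.poly_mem 1
    rw [Polynomial.coe_one] at h1
    have h1B : (1 : PowerSeries R) - B ∈ 𝒮.D := sub_mem h1 hB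
    set B' : PowerSeries R := B + (1 - PowerSeries.X) * (1 - B) with hB'def
    have hB' : B' ∈ 𝒮.D := add_mem hB (𝒮.shift_mem _ h1B)
    have hSB' : 𝒮.S B' = 𝒮.S B := by
      rw [hB'def, 𝒮.S_add _ hB _ (𝒮.shift_mem _ h1B), 𝒮.S_shift _ h1B, add_zero]
    have hc : PowerSeries.constantCoeff B' = 1 := by
      simp [hB'def]
    have hu : IsUnit B' := PowerSeries.isUnit_iff_constantCoeff.2 (by simp [hc])
    obtain ⟨u, hu⟩ := hu
    refine ⟨(↑u⁻¹ : PowerSeries R) * A, A, B', hA, hB', ?_, ?_, ?_⟩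
    · rw [← hu, ← mul_assoc, Units.mul_inv, one_mul]
    · rw [hSB']; exact hb
    · rw [hSB', hx]; field_simp
end

section
/- Let C ∈ ℝ[[σ]] be the power series whose coefficient of σ^{n²} is (−1)ⁿ/n for each integer n ≥ 1 and whose other coefficients are 0. Then C is convergent, but for every nonzero polynomial F ∈ ℝ[σ], the product F·C is not absolutely convergent. (A convergent series need not be telescopable over the absolutely convergent summation.) -/
open Filter Finset

/-- A formal power series over `ℝ` is convergent if its sequence of partial sums
converges. -/
def Convergent (X : PowerSeries ℝ) : Prop :=
  ∃ l : ℝ, Filter.Tendsto (fun N : ℕ => ∑ n ∈ Finset.range N, PowerSeries.coeff n X)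
    Filter.atTop (nhds l)

/-- A formal power series over `ℝ` is absolutely convergent if the series of the
absolute values of its coefficients is summable. -/
def AbsConvergent (X : PowerSeries ℝ) : Prop :=
  Summable fun n : ℕ => |PowerSeries.coeff n X|

theorem convergent_not_telescopable_over_abs (C : PowerSeries ℝ)
    (h1 : ∀ n : ℕ, 1 ≤ n → PowerSeries.coeff (n ^ 2) C = (-1 : ℝ) ^ n / n)
    (h2 : ∀ m : ℕ, (∀ n : ℕ, 1 ≤ n → m ≠ n ^ 2) → PowerSeries.coeff m C = 0) :
    Convergent C ∧
    ∀ F : Polynomial ℝ, F ≠ 0 → ¬ AbsConvergent ((F : PowerSeries ℝ) * C) := by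
  constructor
  · -- Convergence of C
    set T : ℕ → ℝ := fun k => ∑ n ∈ range k, (-1 : ℝ) ^ n / n with hT
    obtain ⟨l, hl⟩ : ∃ l, Tendsto (fun n => ∑ i ∈ range n, (-1 : ℝ) ^ i * (1 / (i + 1)))
        atTop (nhds l) := by
      apply Antitone.tendsto_alternating_series_of_tendsto_zero
      · intro a b hab
        apply div_le_div_of_nonneg_left (by norm_num) (by positivity)
        have : (a : ℝ) ≤ b := by exact_mod_cast hab
        linarith
      · exact tendsto_one_div_add_atTop_nhds_zero_nat
    have hT' : Tendsto T atTop (nhds (-l)) := by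
      rw [← tendsto_add_atTop_iff_nat 1]
      have heq : (fun m => T (m + 1))
          = fun m => -(∑ i ∈ range m, (-1 : ℝ) ^ i * (1 / (i + 1))) := by
        funext m
        rw [hT]
        show ∑ n ∈ range (m + 1), (-1 : ℝ) ^ n / n = _
        rw [Finset.sum_range_succ' (fun n => (-1 : ℝ) ^ n / (n : ℕ)) m]
        rw [← Finset.sum_neg_distrib]
        simp only [Nat.cast_zero, div_zero, add_zero]
        refine Finset.sum_congr rfl fun i _ => ?_
        push_cast
        rw [pow_succ]
        ring
      rw [heq]
      exact hl.neg
    refine ⟨-l, ?_⟩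
    have key : ∀ N : ℕ, 1 ≤ N →
        ∑ n ∈ range N, PowerSeries.coeff n C = T (Nat.sqrt (N - 1) + 1) := by
      intro N hN
      set K := Nat.sqrt (N - 1) with hK
      have himg : (range (K + 1)).image (· ^ 2) ⊆ range N := by
        intro m hm
        simp only [mem_image, mem_range] at hm ⊢
        obtain ⟨n, hn, rfl⟩ := hm
        have hnK : n ≤ K := Nat.lt_succ_iff.mp hn
        have hle : n ^ 2 ≤ K ^ 2 := Nat.pow_le_pow_left hnK 2
        have hle2 : K ^ 2 ≤ N - 1 := by rw [hK]; exact Nat.sqrt_le' (N - 1)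
        omega
      rw [← Finset.sum_subset himg ?_, Finset.sum_image ?_]
      · rw [hT]
        refine Finset.sum_congr rfl fun n _ => ?_
        rcases Nat.eq_zero_or_pos n with rfl | hn1
        · have h0 := h2 0 (by intro n hn h; exact absurd h.symm (by positivity))
          norm_num
          simpa using h0
        · rw [h1 n hn1]
      · intro x _ y _ hxy
        exact Nat.pow_left_injective (by norm_num) hxy
      · intro m hm hm'
        apply h2
        intro n hn1 hmn
        apply hm'
        subst hmn
        simp only [mem_image, mem_range]
        refine ⟨n, ?_, rfl⟩
        rw [Nat.lt_succ_iff, hK]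
        simp only [mem_range] at hm
        have hle : n ^ 2 ≤ N - 1 := by omega
        calc n = Nat.sqrt (n * n) := (Nat.sqrt_eq n).symm
        _ = Nat.sqrt (n ^ 2) := by rw [pow_two]
        _ ≤ Nat.sqrt (N - 1) := Nat.sqrt_le_sqrt hle
    have hcomp : Tendsto (fun N : ℕ => T (Nat.sqrt (N - 1) + 1)) atTop (nhds (-l)) := by
      apply hT'.comp
      rw [Filter.tendsto_atTop_atTop]
      intro b
      refine ⟨b ^ 2 + 1, fun a ha => ?_⟩
      have hle : b ^ 2 ≤ a - 1 := by omega
      have := Nat.sqrt_le_sqrt hle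
      rw [pow_two, Nat.sqrt_eq] at this
      omega
    refine hcomp.congr' ?_
    filter_upwards [eventually_ge_atTop 1] with N hN
    exact (key N hN).symm
  · -- No absolute convergence of F * C
    intro F hF habs
    set d := F.natDegree with hd
    have ha : F.coeff d ≠ 0 := by
      rw [hd, ← Polynomial.leadingCoeff]
      exact Polynomial.leadingCoeff_ne_zero.mpr hF
    have key : ∀ n : ℕ, d + 1 ≤ n →
        PowerSeries.coeff (n ^ 2 + d) ((F : PowerSeries ℝ) * C)
          = F.coeff d * ((-1 : ℝ) ^ n / n) := by
      intro n hn
      rw [PowerSeries.coeff_mul]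
      rw [Finset.sum_eq_single_of_mem (d, n ^ 2)
        (by rw [Finset.HasAntidiagonal.mem_antidiagonal]; omega) ?_]
      · rw [Polynomial.coeff_coe, h1 n (by omega)]
      rintro ⟨k, j⟩ hkj hne
      rw [Finset.HasAntidiagonal.mem_antidiagonal] at hkj
      simp only at hkj ⊢
      by_cases hk : k ≤ d
      · have hj : PowerSeries.coeff j C = 0 := by
          apply h2
          intro m hm hjm
          subst hjm
          have hsq : (n + 1) ^ 2 = n ^ 2 + 2 * n + 1 := by ring
          have hge : n ^ 2 ≤ m ^ 2 := by omega
          have hlt : m ^ 2 < (n + 1) ^ 2 := by omega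
          have hmn : n ≤ m := by
            by_contra h
            push_neg at h
            exact absurd hge (Nat.pow_lt_pow_left h (by norm_num)).not_ge
          have hmn' : m < n + 1 := (Nat.pow_lt_pow_iff_left (by norm_num)).mp hlt
          have hmeq : m = n := by omega
          subst hmeq
          exact hne (by rw [Prod.mk.injEq]; omega)
        rw [hj, mul_zero]
      · rw [Polynomial.coeff_coe, Polynomial.coeff_eq_zero_of_natDegree_lt (by omega), zero_mul]
    have hg : Function.Injective (fun n : ℕ => (n + (d + 1)) ^ 2 + d) := by
      intro a b hab
      simp only [add_left_inj] at hab
      have := Nat.pow_left_injective (n := 2) (by norm_num) hab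
      omega
    have hs := habs.comp_injective hg
    have hs2 : Summable (fun n : ℕ => |F.coeff d| * (1 / ((n + (d + 1) : ℕ) : ℝ))) := by
      refine hs.congr fun n => ?_
      simp only [Function.comp]
      rw [key (n + (d + 1)) (by omega)]
      rw [abs_mul, abs_div, abs_pow, abs_neg, abs_one, one_pow, Nat.abs_cast, mul_one_div]
    have hs3 : Summable (fun n : ℕ => 1 / ((n + (d + 1) : ℕ) : ℝ)) := by
      have h' := hs2.mul_left |F.coeff d|⁻¹
      refine h'.congr fun n => ?_
      rw [← mul_assoc, inv_mul_cancel₀ (abs_ne_zero.mpr ha), one_mul]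
    have hs4 : Summable (fun n : ℕ => 1 / (n : ℝ)) := by
      rw [← summable_nat_add_iff (d + 1)]
      refine hs3.congr fun n => ?_
      push_cast
      ring_nf
    exact Real.not_summable_one_div_natCast hs4
end
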